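/- arXiv:1106.3063 — 2 statements merged into one kernel-verified Lean document; each statement's English description precedes it below -/
import Mathlib

section
/- For every odd integer j ≥ 1, every even integer a ≥ 2, and every odd integer b ≥ 1, the rooted tree RT(0^j, a, b) is super edge-graceful. -/
/-- Edge type of the rooted tree `RT(a₀, …, a_{n-1})`: one edge from the root to each
child `i` (`Sum.inl i`), and one edge from child `i` to each of its `a i` leaf children
(`Sum.inr ⟨i, m⟩`).  The number of edges is `q = n + ∑ i, a i`. -/
abbrev RTEdge (n : ℕ) (a : Fin n → ℕ) := (Fin n) ⊕ (Σ i : Fin n, Fin (a i))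

/-- Vertex type of the rooted tree `RT(a₀, …, a_{n-1})`: the root (`none`), the children
`some (.inl i)` of the root, and the leaves `some (.inr ⟨i, m⟩)` attached to child `i`.
The number of vertices is `p = q + 1`. -/
abbrev RTVertex (n : ℕ) (a : Fin n → ℕ) := Option (RTEdge n a)

/-- The vertex labeling induced by an edge labeling `f`: each vertex gets the sum of the
labels of the edges incident with it. -/
def vertexSum {n : ℕ} (a : Fin n → ℕ) (f : RTEdge n a → ℤ) : RTVertex n a → ℤ
  | none => ∑ i : Fin n, f (Sum.inl i)
  | some (Sum.inl i) => f (Sum.inl i) + ∑ m : Fin (a i), f (Sum.inr ⟨i, m⟩)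
  | some (Sum.inr ⟨i, m⟩) => f (Sum.inr ⟨i, m⟩)

/-- The target label set for `q` objects: `{0, ±1, …, ±(q-1)/2}` if `q` is odd, and
`{±1, …, ±(q/2)}` if `q` is even. -/
noncomputable def segSet (q : ℕ) : Finset ℤ :=
  if q % 2 = 0 then (Finset.Icc (-((q / 2 : ℕ) : ℤ)) ((q / 2 : ℕ) : ℤ)).erase 0
  else Finset.Icc (-((q / 2 : ℕ) : ℤ)) ((q / 2 : ℕ) : ℤ)

/-- The rooted tree `RT(a₀, …, a_{n-1})` is super edge-graceful: there is an edge
labeling which is a bijection onto `{0, ±1, …, ±(q-1)/2}` (`q` odd) resp.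
`{±1, …, ±(q/2)}` (`q` even) whose induced vertex labeling is a bijection onto
`{0, ±1, …, ±(p-1)/2}` (`p` odd) resp. `{±1, …, ±(p/2)}` (`p` even), where
`q = n + ∑ i, a i` and `p = q + 1`. -/
def IsSEG {n : ℕ} (a : Fin n → ℕ) : Prop :=
  ∃ f : RTEdge n a → ℤ,
    Set.BijOn f Set.univ ↑(segSet (n + ∑ i, a i)) ∧
    Set.BijOn (vertexSum a f) Set.univ ↑(segSet (n + ∑ i, a i + 1))

/-- The sequence `(0^j, a, b)` of length `j + 2`. -/
def seq2 (j a b : ℕ) : Fin (j + 2) → ℕ :=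
  fun i => if (i : ℕ) < j then 0 else if (i : ℕ) = j then a else b

def Gd (j a b t : ℕ) : ℤ :=
  if t < j then
    (if t = 0 then -1 else if t % 2 = 1 then (((t+3)/2 : ℕ) : ℤ) else -(((t+2)/2 : ℕ) : ℤ))
  else if t = j then 1 else (((j+a+b+2)/2 : ℕ) : ℤ)
def Fd (j a b t m : ℕ) : ℤ :=
  if t = j then
    (if m % 2 = 0 then (((j+1)/2 + (b+1)/2 + m/2 : ℕ) : ℤ)
     else -(((j+1)/2 + (b+1)/2 + m/2 : ℕ) : ℤ))
  else if m = 0 then -(((j+a+b+2)/2 : ℕ) : ℤ)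
  else if m % 2 = 1 then (((j+1)/2 + (m+1)/2 : ℕ) : ℤ)
  else -(((j+1)/2 + m/2 : ℕ) : ℤ)

def vvald (j a b t : ℕ) : ℤ := if t < j then Gd j a b t else if t = j then 1 else 0

lemma Gd_inj (j a b t1 t2 : ℕ) (hj : j % 2 = 1) (ha : a % 2 = 0) (hb : b % 2 = 1)
    (ha2 : 2 ≤ a) (hb1 : 1 ≤ b) (h1 : t1 < j+2) (h2 : t2 < j+2) (h : Gd j a b t1 = Gd j a b t2) : t1 = t2 := by
  simp only [Gd] at h
  by_contra hne
  revert h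
  split_ifs <;> first | exact ‹False›.elim | (intro hh; first | exact hh.elim | omega)

lemma Gd_ne_Fd (j a b t1 t2 m2 : ℕ) (hj : j % 2 = 1) (ha : a % 2 = 0) (hb : b % 2 = 1)
    (h1 : t1 < j+2) (hm : (t2 = j ∧ m2 < a) ∨ (t2 = j+1 ∧ m2 < b)) :
    Gd j a b t1 ≠ Fd j a b t2 m2 := by
  simp only [Gd, Fd]
  split_ifs <;> first | exact ‹False›.elim | omega

lemma Fd_inj (j a b t1 m1 t2 m2 : ℕ) (hj : j % 2 = 1) (ha : a % 2 = 0) (hb : b % 2 = 1)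
    (hm1 : (t1 = j ∧ m1 < a) ∨ (t1 = j+1 ∧ m1 < b))
    (hm2 : (t2 = j ∧ m2 < a) ∨ (t2 = j+1 ∧ m2 < b))
    (h : Fd j a b t1 m1 = Fd j a b t2 m2) : t1 = t2 ∧ m1 = m2 := by
  simp only [Fd] at h
  revert h
  split_ifs <;> first | exact ‹False›.elim | (intro hh; first | exact hh.elim | omega)

lemma Gd_mem (j a b t1 : ℕ) (hj : j % 2 = 1) (ha : a % 2 = 0) (hb : b % 2 = 1)
    (hb1 : 1 ≤ b) (ha2 : 2 ≤ a) (h1 : t1 < j+2) :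
    Gd j a b t1 ≠ 0 ∧ -(((j+a+b+2)/2 : ℕ) : ℤ) ≤ Gd j a b t1
      ∧ Gd j a b t1 ≤ (((j+a+b+2)/2 : ℕ) : ℤ) := by
  simp only [Gd]
  split_ifs <;> first | exact ‹False›.elim | (refine ⟨by omega, by omega, by omega⟩)

lemma Fd_mem (j a b t m : ℕ) (hj : j % 2 = 1) (ha : a % 2 = 0) (hb : b % 2 = 1)
    (hm : (t = j ∧ m < a) ∨ (t = j+1 ∧ m < b)) :
    Fd j a b t m ≠ 0 ∧ -(((j+a+b+2)/2 : ℕ) : ℤ) ≤ Fd j a b t m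
      ∧ Fd j a b t m ≤ (((j+a+b+2)/2 : ℕ) : ℤ) := by
  simp only [Fd]
  split_ifs <;> first | exact ‹False›.elim | (refine ⟨by omega, by omega, by omega⟩)

lemma N_ne_vvald (j a b t : ℕ) (hj : j % 2 = 1) (ha : a % 2 = 0) (hb : b % 2 = 1)
    (hb1 : 1 ≤ b) (ha2 : 2 ≤ a) (h1 : t < j+2) :
    (((j+a+b+2)/2 : ℕ) : ℤ) ≠ vvald j a b t := by
  simp only [vvald, Gd]
  split_ifs <;> first | exact ‹False›.elim | omega

lemma N_ne_Fd (j a b t m : ℕ) (hj : j % 2 = 1) (ha : a % 2 = 0) (hb : b % 2 = 1)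
    (hm : (t = j ∧ m < a) ∨ (t = j+1 ∧ m < b)) :
    (((j+a+b+2)/2 : ℕ) : ℤ) ≠ Fd j a b t m := by
  simp only [Fd]
  split_ifs <;> first | exact ‹False›.elim | omega

lemma vvald_inj (j a b t1 t2 : ℕ) (hj : j % 2 = 1)
    (h1 : t1 < j+2) (h2 : t2 < j+2) (h : vvald j a b t1 = vvald j a b t2) : t1 = t2 := by
  simp only [vvald, Gd] at h
  by_contra hne
  revert h
  split_ifs <;> first | exact ‹False›.elim | (intro hh; first | exact hh.elim | omega)

lemma vvald_ne_Fd (j a b t1 t2 m2 : ℕ) (hj : j % 2 = 1) (ha : a % 2 = 0) (hb : b % 2 = 1)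
    (h1 : t1 < j+2) (hm : (t2 = j ∧ m2 < a) ∨ (t2 = j+1 ∧ m2 < b)) :
    vvald j a b t1 ≠ Fd j a b t2 m2 := by
  simp only [vvald, Gd, Fd]
  split_ifs <;> first | exact ‹False›.elim | omega

lemma vvald_mem (j a b t1 : ℕ) (hj : j % 2 = 1) (h1 : t1 < j+2) :
    -(((j+a+b+2)/2 : ℕ) : ℤ) ≤ vvald j a b t1
      ∧ vvald j a b t1 ≤ (((j+a+b+2)/2 : ℕ) : ℤ) := by
  simp only [vvald, Gd]
  split_ifs <;> first | exact ‹False›.elim | (refine ⟨by omega, by omega⟩)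

lemma sumG_aux (j a b : ℕ) (hj1 : 1 ≤ j) :
    ∀ k, 2*k+1 ≤ j → ∑ t ∈ Finset.range (2*k+1), Gd j a b t = -1 := by
  intro k
  induction k with
  | zero =>
    intro _
    rw [Finset.range_one, Finset.sum_singleton]
    simp only [Gd]; split_ifs <;> first | exact ‹False›.elim | omega
  | succ k ih =>
    intro hk
    rw [show 2*(k+1)+1 = (2*k+1) + 1 + 1 by ring, Finset.sum_range_succ,
      Finset.sum_range_succ, ih (by omega)]
    have h1 : Gd j a b (2*k+1) + Gd j a b (2*k+1+1) = 0 := by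
      simp only [Gd]; split_ifs <;> first | exact ‹False›.elim | omega
    linarith

lemma sumG (j a b : ℕ) (hj : j % 2 = 1) :
    ∑ t ∈ Finset.range j, Gd j a b t = -1 := by
  have := sumG_aux j a b (by omega) (j/2) (by omega)
  rwa [show 2*(j/2)+1 = j by omega] at this

lemma sumA (j a b : ℕ) : ∀ k, ∑ t ∈ Finset.range (2*k), Fd j a b j t = 0 := by
  intro k
  induction k with
  | zero => simp
  | succ k ih =>
    rw [show 2*(k+1) = 2*k + 1 + 1 by ring, Finset.sum_range_succ, Finset.sum_range_succ, ih]
    have h1 : Fd j a b j (2*k) + Fd j a b j (2*k+1) = 0 := by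
      simp only [Fd]; split_ifs <;> first | exact ‹False›.elim | omega
    linarith

lemma sumB (j a b : ℕ) : ∀ k, ∑ t ∈ Finset.range (2*k+1), Fd j a b (j+1) t
    = -(((j+a+b+2)/2 : ℕ) : ℤ) := by
  intro k
  induction k with
  | zero =>
    rw [Finset.range_one, Finset.sum_singleton]
    simp only [Fd]; split_ifs <;> first | exact ‹False›.elim | omega
  | succ k ih =>
    rw [show 2*(k+1)+1 = (2*k+1) + 1 + 1 by ring, Finset.sum_range_succ,
      Finset.sum_range_succ, ih]
    have h1 : Fd j a b (j+1) (2*k+1) + Fd j a b (j+1) (2*k+1+1) = 0 := by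
      simp only [Fd]; split_ifs <;> first | exact ‹False›.elim | omega
    linarith

lemma segSet_card (q : ℕ) : (segSet q).card = q := by
  have hc : (Finset.Icc (-((q/2 : ℕ):ℤ)) ((q/2 : ℕ):ℤ)).card = 2*(q/2)+1 := by
    rw [Int.card_Icc]; omega
  have h0 : (0:ℤ) ∈ Finset.Icc (-((q/2 : ℕ):ℤ)) ((q/2 : ℕ):ℤ) := by
    rw [Finset.mem_Icc]; omega
  unfold segSet
  split_ifs with h
  · rw [Finset.card_erase_of_mem h0, hc]; omega
  · rw [hc]; omega

def fdef (j a b : ℕ) : RTEdge (j+2) (seq2 j a b) → ℤ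
  | .inl i => Gd j a b i.val
  | .inr ⟨i, m⟩ => Fd j a b i.val m.val

lemma Gd_at_j (j a b : ℕ) : Gd j a b j = 1 := by
  simp only [Gd]; split_ifs <;> first | exact ‹False›.elim | omega

lemma Gd_at_j1 (j a b : ℕ) : Gd j a b (j+1) = (((j+a+b+2)/2 : ℕ) : ℤ) := by
  simp only [Gd]; split_ifs <;> first | exact ‹False›.elim | omega

lemma rootSum (j a b : ℕ) (hj : j % 2 = 1) :
    ∑ i : Fin (j+2), Gd j a b i.val = (((j+a+b+2)/2 : ℕ) : ℤ) := by
  rw [Fin.sum_univ_eq_sum_range (fun t => Gd j a b t) (j+2), Finset.sum_range_succ,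
    Finset.sum_range_succ, sumG j a b hj, Gd_at_j, Gd_at_j1]
  ring

lemma leafSum (j a b : ℕ) (ha : a % 2 = 0) (hb : b % 2 = 1) (i : Fin (j+2)) :
    ∑ m : Fin (seq2 j a b i), Fd j a b i.val m.val =
      if (i:ℕ) < j then 0 else if (i:ℕ) = j then 0 else -(((j+a+b+2)/2 : ℕ) : ℤ) := by
  rw [Fin.sum_univ_eq_sum_range (fun t => Fd j a b i.val t) (seq2 j a b i)]
  have hi := i.isLt
  rcases Nat.lt_trichotomy (i:ℕ) j with h | h | h
  · have hs : seq2 j a b i = 0 := by simp only [seq2]; rw [if_pos h]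
    rw [hs, if_pos h]; simp
  · have hs : seq2 j a b i = a := by
      simp only [seq2]; rw [if_neg (by omega), if_pos h]
    rw [hs, h, if_neg (by omega), if_pos rfl]
    have := sumA j a b (a/2)
    rwa [show 2*(a/2) = a by omega] at this
  · have h' : (i:ℕ) = j+1 := by omega
    have hs : seq2 j a b i = b := by
      simp only [seq2]; rw [if_neg (by omega), if_neg (by omega)]
    rw [hs, h', if_neg (by omega), if_neg (by omega)]
    have := sumB j a b (b/2)
    rwa [show 2*(b/2)+1 = b by omega] at this

set_option maxHeartbeats 1000000 in
/-- For every odd integer `j ≥ 1`, every even integer `a ≥ 2`, and every odd integer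
`b ≥ 1`, the rooted tree `RT(0^j, a, b)` is super edge-graceful. -/
theorem stmt1 (j a b : ℕ) (hj : Odd j) (hj1 : 1 ≤ j) (ha : Even a) (ha2 : 2 ≤ a)
    (hb : Odd b) (hb1 : 1 ≤ b) : IsSEG (seq2 j a b) := by
  rw [Nat.odd_iff] at hj hb
  rw [Nat.even_iff] at ha
  have hsum : (∑ i, seq2 j a b i) = a + b := by
    simp only [seq2]
    rw [Fin.sum_univ_eq_sum_range (fun t => if t < j then 0 else if t = j then a else b) (j+2),
      Finset.sum_range_succ, Finset.sum_range_succ]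
    have h0 : ∑ t ∈ Finset.range j, (if t < j then 0 else if t = j then a else b) = 0 :=
      Finset.sum_eq_zero (fun t ht => by rw [Finset.mem_range] at ht; rw [if_pos ht])
    have e1 : (if j < j then 0 else if j = j then a else b) = a := by
      rw [if_neg (by omega), if_pos rfl]
    have e2 : (if j+1 < j then 0 else if j+1 = j then a else b) = b := by
      rw [if_neg (by omega), if_neg (by omega)]
    rw [h0, e1, e2]; omega
  have hbound : ∀ (i : Fin (j+2)) (m : Fin (seq2 j a b i)),
      ((i:ℕ) = j ∧ (m:ℕ) < a) ∨ ((i:ℕ) = j+1 ∧ (m:ℕ) < b) := by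
    intro i m
    have hi := i.isLt
    have hm0 : (m:ℕ) < seq2 j a b i := m.isLt
    simp only [seq2] at hm0
    rcases Nat.lt_trichotomy (i:ℕ) j with hc | hc | hc
    · have e1 : (if (i:ℕ) < j then (0:ℕ) else if (i:ℕ) = j then a else b) = 0 := if_pos hc
      omega
    · have e1 : (if (i:ℕ) < j then (0:ℕ) else if (i:ℕ) = j then a else b)
          = (if (i:ℕ) = j then a else b) := if_neg (by omega)
      have e2 : (if (i:ℕ) = j then a else b) = a := if_pos hc
      omega
    · have e1 : (if (i:ℕ) < j then (0:ℕ) else if (i:ℕ) = j then a else b)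
          = (if (i:ℕ) = j then a else b) := if_neg (by omega)
      have e2 : (if (i:ℕ) = j then a else b) = b := if_neg (by omega)
      omega
  unfold IsSEG
  rw [hsum, show j + 2 + (a + b) = j+a+b+2 by ring]
  have hq : (j+a+b+2) % 2 = 0 := by omega
  refine ⟨fdef j a b, ?_, ?_⟩
  · -- edge bijection
    have hmem : ∀ e, fdef j a b e ∈ segSet (j+a+b+2) := by
      intro e
      unfold segSet
      rw [if_pos hq, Finset.mem_erase, Finset.mem_Icc]
      rcases e with i | ⟨i, m⟩
      · simp only [fdef]
        obtain ⟨x1, x2, x3⟩ := Gd_mem j a b (i:ℕ) hj ha hb hb1 ha2 i.isLt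
        exact ⟨x1, x2, x3⟩
      · simp only [fdef]
        obtain ⟨x1, x2, x3⟩ := Fd_mem j a b (i:ℕ) (m:ℕ) hj ha hb (hbound i m)
        exact ⟨x1, x2, x3⟩
    have hinj : Function.Injective (fdef j a b) := by
      rintro (i1 | ⟨i1, m1⟩) (i2 | ⟨i2, m2⟩) h <;> simp only [fdef] at h
      · exact congrArg Sum.inl
          (Fin.ext (Gd_inj j a b (i1:ℕ) (i2:ℕ) hj ha hb ha2 hb1 i1.isLt i2.isLt h))
      · exact absurd h (Gd_ne_Fd j a b (i1:ℕ) (i2:ℕ) (m2:ℕ) hj ha hb i1.isLt (hbound i2 m2))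
      · exact absurd h.symm
          (Gd_ne_Fd j a b (i2:ℕ) (i1:ℕ) (m1:ℕ) hj ha hb i2.isLt (hbound i1 m1))
      · obtain ⟨hii, hmm⟩ := Fd_inj j a b (i1:ℕ) (m1:ℕ) (i2:ℕ) (m2:ℕ) hj ha hb
          (hbound i1 m1) (hbound i2 m2) h
        obtain rfl : i1 = i2 := Fin.ext hii
        rw [Fin.ext hmm]
    have hcardE : Fintype.card (RTEdge (j+2) (seq2 j a b)) = j+a+b+2 := by
      simp only [RTEdge, Fintype.card_sum, Fintype.card_fin, Fintype.card_sigma]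
      rw [hsum]; omega
    have himg : Finset.image (fdef j a b) Finset.univ = segSet (j+a+b+2) := by
      apply Finset.eq_of_subset_of_card_le
      · intro y hy
        rw [Finset.mem_image] at hy
        obtain ⟨x, _, rfl⟩ := hy
        exact hmem x
      · rw [Finset.card_image_of_injective _ hinj, Finset.card_univ, hcardE, segSet_card]
    refine ⟨fun x _ => hmem x, hinj.injOn, fun y hy => ?_⟩
    have hy' : y ∈ Finset.image (fdef j a b) Finset.univ := by
      rw [himg]; exact hy
    rw [Finset.mem_image] at hy'
    obtain ⟨x, _, hx⟩ := hy'
    exact ⟨x, Set.mem_univ x, hx⟩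
  · -- vertex bijection
    have hroot : vertexSum (seq2 j a b) (fdef j a b) none = (((j+a+b+2)/2 : ℕ) : ℤ) := by
      simp only [vertexSum, fdef]
      exact rootSum j a b hj
    have hinl : ∀ i : Fin (j+2),
        vertexSum (seq2 j a b) (fdef j a b) (some (Sum.inl i)) = vvald j a b (i:ℕ) := by
      intro i
      have hi := i.isLt
      simp only [vertexSum, fdef]
      rw [leafSum j a b ha hb i]
      rcases Nat.lt_trichotomy (i:ℕ) j with hc | hc | hc
      · rw [if_pos hc, add_zero]
        simp only [vvald]
        rw [if_pos hc]
      · rw [hc, if_neg (by omega), if_pos rfl, add_zero, Gd_at_j]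
        simp only [vvald]
        rw [if_neg (by omega)]
        simp
      · have hc' : (i:ℕ) = j+1 := by omega
        rw [hc', if_neg (by omega), if_neg (by omega), Gd_at_j1]
        simp only [vvald]
        rw [if_neg (by omega), if_neg (by omega)]
        ring
    have hinr : ∀ (i : Fin (j+2)) (m : Fin (seq2 j a b i)),
        vertexSum (seq2 j a b) (fdef j a b) (some (Sum.inr ⟨i, m⟩)) = Fd j a b (i:ℕ) (m:ℕ) := by
      intro i m
      simp only [vertexSum, fdef]
    have hmemV : ∀ v, vertexSum (seq2 j a b) (fdef j a b) v ∈ segSet (j+a+b+2+1) := by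
      intro v
      unfold segSet
      rw [if_neg (by omega), Finset.mem_Icc]
      rcases v with _ | (i | ⟨i, m⟩)
      · rw [hroot]; omega
      · rw [hinl i]
        obtain ⟨x1, x2⟩ := vvald_mem j a b (i:ℕ) hj i.isLt
        omega
      · rw [hinr i m]
        obtain ⟨x1, x2, x3⟩ := Fd_mem j a b (i:ℕ) (m:ℕ) hj ha hb (hbound i m)
        omega
    have hinjV : Function.Injective (vertexSum (seq2 j a b) (fdef j a b)) := by
      rintro (_ | (i1 | ⟨i1, m1⟩)) (_ | (i2 | ⟨i2, m2⟩)) h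
      · rfl
      · rw [hroot, hinl i2] at h
        exact absurd h (N_ne_vvald j a b (i2:ℕ) hj ha hb hb1 ha2 i2.isLt)
      · rw [hroot, hinr i2 m2] at h
        exact absurd h (N_ne_Fd j a b (i2:ℕ) (m2:ℕ) hj ha hb (hbound i2 m2))
      · rw [hroot, hinl i1] at h
        exact absurd h.symm (N_ne_vvald j a b (i1:ℕ) hj ha hb hb1 ha2 i1.isLt)
      · rw [hinl i1, hinl i2] at h
        exact congrArg (fun t => some (Sum.inl t))
          (Fin.ext (vvald_inj j a b (i1:ℕ) (i2:ℕ) hj i1.isLt i2.isLt h))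
      · rw [hinl i1, hinr i2 m2] at h
        exact absurd h (vvald_ne_Fd j a b (i1:ℕ) (i2:ℕ) (m2:ℕ) hj ha hb i1.isLt (hbound i2 m2))
      · rw [hroot, hinr i1 m1] at h
        exact absurd h.symm (N_ne_Fd j a b (i1:ℕ) (m1:ℕ) hj ha hb (hbound i1 m1))
      · rw [hinl i2, hinr i1 m1] at h
        exact absurd h.symm
          (vvald_ne_Fd j a b (i2:ℕ) (i1:ℕ) (m1:ℕ) hj ha hb i2.isLt (hbound i1 m1))
      · rw [hinr i1 m1, hinr i2 m2] at h
        obtain ⟨hii, hmm⟩ := Fd_inj j a b (i1:ℕ) (m1:ℕ) (i2:ℕ) (m2:ℕ) hj ha hb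
          (hbound i1 m1) (hbound i2 m2) h
        obtain rfl : i1 = i2 := Fin.ext hii
        rw [Fin.ext hmm]
    have hcardV : Fintype.card (RTVertex (j+2) (seq2 j a b)) = j+a+b+2+1 := by
      simp only [RTVertex, RTEdge, Fintype.card_option, Fintype.card_sum, Fintype.card_fin,
        Fintype.card_sigma]
      rw [hsum]; omega
    have himgV : Finset.image (vertexSum (seq2 j a b) (fdef j a b)) Finset.univ
        = segSet (j+a+b+2+1) := by
      apply Finset.eq_of_subset_of_card_le
      · intro y hy
        rw [Finset.mem_image] at hy
        obtain ⟨x, _, rfl⟩ := hy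
        exact hmemV x
      · rw [Finset.card_image_of_injective _ hinjV, Finset.card_univ, hcardV, segSet_card]
    refine ⟨fun x _ => hmemV x, hinjV.injOn, fun y hy => ?_⟩
    have hy' : y ∈ Finset.image (vertexSum (seq2 j a b) (fdef j a b)) Finset.univ := by
      rw [himgV]; exact hy
    rw [Finset.mem_image] at hy'
    obtain ⟨x, _, hx⟩ := hy'
    exact ⟨x, Set.mem_univ x, hx⟩
end

section
/- For every odd integer j ≥ 1 and all even integers a, b with 2 ≤ a ≤ b, the rooted tree RT(0^j, a, b) is super edge-graceful. -/
/-! ### Auxiliary construction -/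

/-- Labels of the `j` edges from the root to the leafless children. -/
def soloL (g i : ℕ) : ℤ :=
  if i = 0 then -1
  else if i % 2 = 1 then ((g + (i + 1) / 2 : ℕ) : ℤ)
  else -((g + i / 2 : ℕ) : ℤ)

/-- Labels of the `a` leaf edges at child `j`. -/
def aL (K m : ℕ) : ℤ :=
  if m = 0 then (K : ℤ)
  else if m = 1 then 1
  else if m % 2 = 0 then ((m / 2 + 1 : ℕ) : ℤ)
  else -((m / 2 + 1 : ℕ) : ℤ)

/-- Labels of the `b` leaf edges at child `j+1`. -/
def bL (A m : ℕ) : ℤ :=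
  if m % 2 = 0 then ((A + 1 + m / 2 : ℕ) : ℤ) else -((A + 1 + m / 2 : ℕ) : ℤ)

/-- The super edge-graceful edge labeling of `RT(0^j, a, b)`. -/
def theF (j a b : ℕ) : RTEdge (j + 2) (seq2 j a b) → ℤ
  | .inl i =>
      if (i : ℕ) < j then soloL ((a + b) / 2) (i : ℕ)
      else if (i : ℕ) = j then 0
      else -(((j + 1 + a + b) / 2 : ℕ) : ℤ)
  | .inr ⟨i, m⟩ =>
      if (i : ℕ) = j then aL ((j + 1 + a + b) / 2) (m : ℕ) else bL (a / 2) (m : ℕ)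

/-- The induced vertex labeling, in closed form. -/
def theV (j a b : ℕ) : RTVertex (j + 2) (seq2 j a b) → ℤ
  | none => -(((j + 1 + a + b) / 2 : ℕ) : ℤ) - 1
  | some (.inl i) =>
      if (i : ℕ) < j then soloL ((a + b) / 2) (i : ℕ)
      else if (i : ℕ) = j then (((j + 1 + a + b) / 2 : ℕ) : ℤ) + 1
      else -(((j + 1 + a + b) / 2 : ℕ) : ℤ)
  | some (.inr ⟨i, m⟩) =>
      if (i : ℕ) = j then aL ((j + 1 + a + b) / 2) (m : ℕ) else bL (a / 2) (m : ℕ)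

lemma solo_sum (g c : ℕ) : ∑ i ∈ Finset.range (2 * c + 1), soloL g i = -1 := by
  induction c with
  | zero => simp [soloL]
  | succ t ih =>
    have h : 2 * (t + 1) + 1 = (2 * t + 1) + 1 + 1 := by ring
    rw [h, Finset.sum_range_succ, Finset.sum_range_succ, ih]
    simp only [soloL]
    split_ifs <;> first | contradiction | omega

lemma aL_sum (K A : ℕ) : 1 ≤ A → ∑ m ∈ Finset.range (2 * A), aL K m = (K : ℤ) + 1 := by
  induction A with
  | zero => intro h; omega
  | succ t ih =>
    intro _
    rcases Nat.eq_zero_or_pos t with h0 | hpos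
    · subst h0; simp [Finset.sum_range_succ, aL]
    · have h : 2 * (t + 1) = 2 * t + 1 + 1 := by ring
      rw [h, Finset.sum_range_succ, Finset.sum_range_succ, ih hpos]
      simp only [aL]
      split_ifs <;> first | contradiction | omega

lemma bL_sum (A B : ℕ) : ∑ m ∈ Finset.range (2 * B), bL A m = 0 := by
  induction B with
  | zero => simp
  | succ t ih =>
    have h : 2 * (t + 1) = 2 * t + 1 + 1 := by ring
    rw [h, Finset.sum_range_succ, Finset.sum_range_succ, ih]
    simp only [bL]
    split_ifs <;> first | contradiction | omega

lemma seq2_cases (j a b : ℕ) {i : Fin (j + 2)} (m : Fin (seq2 j a b i)) :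
    ((i : ℕ) = j ∧ (m : ℕ) < a) ∨ ((i : ℕ) = j + 1 ∧ (m : ℕ) < b) := by
  have hi := i.isLt
  have hm := m.isLt
  by_cases h1 : (i : ℕ) < j
  · simp only [seq2, if_pos h1] at hm; omega
  · by_cases h2 : (i : ℕ) = j
    · simp only [seq2, if_neg h1, if_pos h2] at hm; omega
    · simp only [seq2, if_neg h1, if_neg h2] at hm; omega

lemma sum_seq2 (j a b : ℕ) : ∑ i : Fin (j + 2), seq2 j a b i = a + b := by
  have h : ∑ i : Fin (j + 2), seq2 j a b i
      = ∑ t ∈ Finset.range (j + 2), (if t < j then 0 else if t = j then a else b) := by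
    rw [← Fin.sum_univ_eq_sum_range (fun t => if t < j then 0 else if t = j then a else b) (j + 2)]
    exact Finset.sum_congr rfl fun i _ => rfl
  rw [h, Finset.sum_range_succ, Finset.sum_range_succ,
    Finset.sum_eq_zero (fun t ht => by rw [if_pos (Finset.mem_range.mp ht)])]
  split_ifs <;> omega

lemma bijOn_of_inj {X : Type*} [Fintype X] (f : X → ℤ) (S : Finset ℤ)
    (hinj : Function.Injective f) (hmem : ∀ x, f x ∈ S)
    (hcard : S.card = Fintype.card X) :
    Set.BijOn f Set.univ ↑S := by
  classical
  have hsub : Finset.univ.image f ⊆ S := by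
    intro y hy; obtain ⟨x, -, rfl⟩ := Finset.mem_image.mp hy; exact hmem x
  have himg : Finset.univ.image f = S := Finset.eq_of_subset_of_card_le hsub (by
    rw [Finset.card_image_of_injective _ hinj, Finset.card_univ, hcard])
  refine ⟨fun x _ => hmem x, hinj.injOn, ?_⟩
  intro y hy
  have : y ∈ Finset.univ.image f := himg ▸ (Finset.mem_coe.mp hy)
  obtain ⟨x, -, rfl⟩ := Finset.mem_image.mp this
  exact ⟨x, trivial, rfl⟩

section Main

variable {j a b c A B : ℕ}

lemma theF_inj (hc : j = 2 * c + 1) (hA : a = A + A) (hB : b = B + B)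
    (ha2 : 2 ≤ a) (hab : a ≤ b) : Function.Injective (theF j a b) := by
  rintro (i | ⟨i, m⟩) (i' | ⟨i', m'⟩) h
  · have hi := i.isLt; have hi' := i'.isLt
    have : (i : ℕ) = (i' : ℕ) := by
      simp only [theF, soloL] at h
      repeat' split_ifs at h
      all_goals first | contradiction | omega
    exact congrArg Sum.inl (Fin.ext this)
  · exfalso
    have hi := i.isLt
    simp only [theF, soloL, aL, bL] at h
    rcases seq2_cases j a b m' with ⟨h1, h2⟩ | ⟨h1, h2⟩ <;>
      [rw [if_pos h1] at h; rw [if_neg (by omega : ¬(i' : ℕ) = j)] at h] <;>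
      repeat' split_ifs at h
    all_goals first | contradiction | omega
  · exfalso
    have hi' := i'.isLt
    simp only [theF, soloL, aL, bL] at h
    rcases seq2_cases j a b m with ⟨h1, h2⟩ | ⟨h1, h2⟩ <;>
      [rw [if_pos h1] at h; rw [if_neg (by omega : ¬(i : ℕ) = j)] at h] <;>
      repeat' split_ifs at h
    all_goals first | contradiction | omega
  · simp only [theF, aL, bL] at h
    have key : (i : ℕ) = (i' : ℕ) ∧ (m : ℕ) = (m' : ℕ) := by
      rcases seq2_cases j a b m with ⟨h1, h2⟩ | ⟨h1, h2⟩ <;>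
        [rw [if_pos h1] at h; rw [if_neg (by omega : ¬(i : ℕ) = j)] at h] <;>
        rcases seq2_cases j a b m' with ⟨h1', h2'⟩ | ⟨h1', h2'⟩ <;>
        [rw [if_pos h1'] at h; rw [if_neg (by omega : ¬(i' : ℕ) = j)] at h;
         rw [if_pos h1'] at h; rw [if_neg (by omega : ¬(i' : ℕ) = j)] at h] <;>
        repeat' split_ifs at h
      all_goals first | contradiction | omega
    obtain ⟨h1, h2⟩ := key
    have hii : i = i' := Fin.ext h1
    subst hii
    have hmm : m = m' := Fin.ext h2
    subst hmm
    rfl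

lemma theF_mem (hc : j = 2 * c + 1) (hA : a = A + A) (hB : b = B + B)
    (ha2 : 2 ≤ a) (hab : a ≤ b) :
    ∀ x, theF j a b x ∈
      Finset.Icc (-(((j + 1 + a + b) / 2 : ℕ) : ℤ)) (((j + 1 + a + b) / 2 : ℕ) : ℤ) := by
  rintro (i | ⟨i, m⟩) <;> simp only [theF, soloL, aL, bL, Finset.mem_Icc]
  · have hi := i.isLt
    repeat' split_ifs
    all_goals first | contradiction | omega
  · rcases seq2_cases j a b m with ⟨h1, h2⟩ | ⟨h1, h2⟩ <;>
      [rw [if_pos h1]; rw [if_neg (by omega : ¬(i : ℕ) = j)]] <;>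
      repeat' split_ifs
    all_goals first | contradiction | omega

lemma theV_inj (hc : j = 2 * c + 1) (hA : a = A + A) (hB : b = B + B)
    (ha2 : 2 ≤ a) (hab : a ≤ b) : Function.Injective (theV j a b) := by
  rintro (_ | (i | ⟨i, m⟩)) (_ | (i' | ⟨i', m'⟩)) h
  · rfl
  · exfalso
    have hi' := i'.isLt
    simp only [theV, soloL] at h
    repeat' split_ifs at h
    all_goals first | contradiction | omega
  · exfalso
    simp only [theV, soloL, aL, bL] at h
    rcases seq2_cases j a b m' with ⟨h1, h2⟩ | ⟨h1, h2⟩ <;>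
      [rw [if_pos h1] at h; rw [if_neg (by omega : ¬(i' : ℕ) = j)] at h] <;>
      repeat' split_ifs at h
    all_goals first | contradiction | omega
  · exfalso
    have hi := i.isLt
    simp only [theV, soloL] at h
    repeat' split_ifs at h
    all_goals first | contradiction | omega
  · have hi := i.isLt; have hi' := i'.isLt
    have : (i : ℕ) = (i' : ℕ) := by
      simp only [theV, soloL] at h
      repeat' split_ifs at h
      all_goals first | contradiction | omega
    exact congrArg (fun t => some (Sum.inl t)) (Fin.ext this)
  · exfalso
    have hi := i.isLt
    simp only [theV, soloL, aL, bL] at h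
    rcases seq2_cases j a b m' with ⟨h1, h2⟩ | ⟨h1, h2⟩ <;>
      [rw [if_pos h1] at h; rw [if_neg (by omega : ¬(i' : ℕ) = j)] at h] <;>
      repeat' split_ifs at h
    all_goals first | contradiction | omega
  · exfalso
    simp only [theV, soloL, aL, bL] at h
    rcases seq2_cases j a b m with ⟨h1, h2⟩ | ⟨h1, h2⟩ <;>
      [rw [if_pos h1] at h; rw [if_neg (by omega : ¬(i : ℕ) = j)] at h] <;>
      repeat' split_ifs at h
    all_goals first | contradiction | omega
  · exfalso
    have hi' := i'.isLt
    simp only [theV, soloL, aL, bL] at h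
    rcases seq2_cases j a b m with ⟨h1, h2⟩ | ⟨h1, h2⟩ <;>
      [rw [if_pos h1] at h; rw [if_neg (by omega : ¬(i : ℕ) = j)] at h] <;>
      repeat' split_ifs at h
    all_goals first | contradiction | omega
  · simp only [theV, aL, bL] at h
    have key : (i : ℕ) = (i' : ℕ) ∧ (m : ℕ) = (m' : ℕ) := by
      rcases seq2_cases j a b m with ⟨h1, h2⟩ | ⟨h1, h2⟩ <;>
        [rw [if_pos h1] at h; rw [if_neg (by omega : ¬(i : ℕ) = j)] at h] <;>
        rcases seq2_cases j a b m' with ⟨h1', h2'⟩ | ⟨h1', h2'⟩ <;>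
        [rw [if_pos h1'] at h; rw [if_neg (by omega : ¬(i' : ℕ) = j)] at h;
         rw [if_pos h1'] at h; rw [if_neg (by omega : ¬(i' : ℕ) = j)] at h] <;>
        repeat' split_ifs at h
      all_goals first | contradiction | omega
    obtain ⟨h1, h2⟩ := key
    have hii : i = i' := Fin.ext h1
    subst hii
    have hmm : m = m' := Fin.ext h2
    subst hmm
    rfl

lemma theV_mem (hc : j = 2 * c + 1) (hA : a = A + A) (hB : b = B + B)
    (ha2 : 2 ≤ a) (hab : a ≤ b) :
    ∀ v, theV j a b v ∈
      (Finset.Icc (-(((j + 3 + a + b) / 2 : ℕ) : ℤ)) (((j + 3 + a + b) / 2 : ℕ) : ℤ)).erase 0 := by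
  rintro (_ | (i | ⟨i, m⟩)) <;>
    simp only [theV, soloL, aL, bL, Finset.mem_erase, Finset.mem_Icc]
  · omega
  · have hi := i.isLt
    repeat' split_ifs
    all_goals first | contradiction | omega
  · rcases seq2_cases j a b m with ⟨h1, h2⟩ | ⟨h1, h2⟩ <;>
      [rw [if_pos h1]; rw [if_neg (by omega : ¬(i : ℕ) = j)]] <;>
      repeat' split_ifs
    all_goals first | contradiction | omega

lemma theV_eq (hc : j = 2 * c + 1) (hA : a = A + A) (hB : b = B + B) (ha2 : 2 ≤ a) :
    ∀ v, vertexSum (seq2 j a b) (theF j a b) v = theV j a b v := by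
  rintro (_ | (i | ⟨i, m⟩))
  · simp only [vertexSum, theV]
    have h1 : ∑ i : Fin (j + 2), theF j a b (Sum.inl i)
        = ∑ t ∈ Finset.range (j + 2),
            (if t < j then soloL ((a + b) / 2) t else if t = j then 0
             else -(((j + 1 + a + b) / 2 : ℕ) : ℤ)) := by
      rw [← Fin.sum_univ_eq_sum_range
        (fun t => if t < j then soloL ((a + b) / 2) t else if t = j then 0
             else -(((j + 1 + a + b) / 2 : ℕ) : ℤ)) (j + 2)]
      exact Finset.sum_congr rfl fun i _ => rfl
    rw [h1, Finset.sum_range_succ, Finset.sum_range_succ,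
      Finset.sum_congr rfl (fun t ht => if_pos (Finset.mem_range.mp ht)), hc, solo_sum]
    split_ifs <;> first | contradiction | omega
  · simp only [vertexSum, theV]
    have hsum : (∑ m : Fin (seq2 j a b i), theF j a b (Sum.inr ⟨i, m⟩))
        = ∑ t ∈ Finset.range (seq2 j a b i),
            (if (i : ℕ) = j then aL ((j + 1 + a + b) / 2) t else bL (a / 2) t) := by
      rw [← Fin.sum_univ_eq_sum_range
        (fun t => if (i : ℕ) = j then aL ((j + 1 + a + b) / 2) t else bL (a / 2) t)
        (seq2 j a b i)]
      exact Finset.sum_congr rfl fun m _ => rfl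
    rw [hsum]
    have hi := i.isLt
    by_cases h1 : (i : ℕ) < j
    · have h0 : seq2 j a b i = 0 := by simp [seq2, h1]
      rw [h0, Finset.sum_range_zero, add_zero]
      simp only [theF]
      rw [if_pos h1, if_pos h1]
    · by_cases h2 : (i : ℕ) = j
      · have h0 : seq2 j a b i = a := by simp [seq2, h1, h2]
        rw [h0, Finset.sum_congr rfl (fun t _ => if_pos h2),
          show a = 2 * A by omega, aL_sum _ A (by omega)]
        simp only [theF]
        rw [if_neg h1, if_neg h1, if_pos h2, if_pos h2]
        ring
      · have h0 : seq2 j a b i = b := by simp [seq2, h1, h2]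
        rw [h0, Finset.sum_congr rfl (fun t _ => if_neg h2),
          show b = 2 * B by omega, bL_sum]
        simp only [theF]
        rw [if_neg h1, if_neg h1, if_neg h2, if_neg h2]
        ring
  · rfl

end Main

/-- For every odd integer `j ≥ 1` and all even integers `a, b` with `2 ≤ a ≤ b`, the
rooted tree `RT(0^j, a, b)` is super edge-graceful. -/
theorem stmt4 (j a b : ℕ) (hj : Odd j) (hj1 : 1 ≤ j) (ha : Even a) (hb : Even b)
    (ha2 : 2 ≤ a) (hab : a ≤ b) : IsSEG (seq2 j a b) := by
  obtain ⟨c, hc⟩ := hj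
  obtain ⟨A, hA⟩ := ha
  obtain ⟨B, hB⟩ := hb
  have hcardE : Fintype.card (RTEdge (j + 2) (seq2 j a b)) = j + 2 + (a + b) := by
    simp [Fintype.card_sum, Fintype.card_sigma, sum_seq2]
  refine ⟨theF j a b, ?_, ?_⟩
  · rw [sum_seq2]
    have hseg : segSet (j + 2 + (a + b))
        = Finset.Icc (-(((j + 1 + a + b) / 2 : ℕ) : ℤ)) (((j + 1 + a + b) / 2 : ℕ) : ℤ) := by
      unfold segSet
      rw [if_neg (by omega), show (j + 2 + (a + b)) / 2 = (j + 1 + a + b) / 2 by omega]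
    rw [hseg]
    refine bijOn_of_inj _ _ (theF_inj hc hA hB ha2 hab) (theF_mem hc hA hB ha2 hab) ?_
    rw [hcardE, Int.card_Icc]
    omega
  · rw [sum_seq2]
    have hseg : segSet (j + 2 + (a + b) + 1)
        = (Finset.Icc (-(((j + 3 + a + b) / 2 : ℕ) : ℤ))
            (((j + 3 + a + b) / 2 : ℕ) : ℤ)).erase 0 := by
      unfold segSet
      rw [if_pos (by omega), show (j + 2 + (a + b) + 1) / 2 = (j + 3 + a + b) / 2 by omega]
    rw [hseg]
    refine Set.BijOn.congr ?_ (fun v _ => (theV_eq hc hA hB ha2 v).symm)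
    refine bijOn_of_inj _ _ (theV_inj hc hA hB ha2 hab) (theV_mem hc hA hB ha2 hab) ?_
    have hcardV : Fintype.card (RTVertex (j + 2) (seq2 j a b)) = j + 2 + (a + b) + 1 := by
      simp only [RTVertex, Fintype.card_option, hcardE]
    rw [hcardV, Finset.card_erase_of_mem (by simp only [Finset.mem_Icc]; omega), Int.card_Icc]
    omega
end
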